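/- Let 0 < α ≤ 1/2, let M be the 2×2 symmetric stochastic matrix [[1−α, α],[α, 1−α]] on {A,B}, and let μ be a strictly positive initial pmf on {A,B}. Consider the Markov chain path pmf p(x_0,x_1,x_2) = μ(x_0)·M(x_0,x_1)·M(x_1,x_2), and let U = (X_0, X_2) and X = X_1. Then every joint pmf of (U, X, Q) extending the law of (U,X), where Q takes values in {qA, qB, qAB}, that satisfies decodability (P(X=A, Q=qB)=0 and P(X=B, Q=qA)=0) and privacy (Q independent of U) has expected query length E[ℓ(Q)] ≥ 2 − 2α²/(α² + (1−α)²), where ℓ(qA)=ℓ(qB)=1 and ℓ(qAB)=2. -/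

import Mathlib

/-- The two sources. -/
inductive Src | A | B
deriving DecidableEq

instance instFintypeSrc : Fintype Src :=
  ⟨{Src.A, Src.B}, by intro x; cases x <;> simp⟩

/-- The three possible queries: only source A, only source B, or both. -/
inductive Qry | qA | qB | qAB
deriving DecidableEq

instance instFintypeQry : Fintype Qry :=
  ⟨{Qry.qA, Qry.qB, Qry.qAB}, by intro x; cases x <;> simp⟩

/-- The length (download cost) of each query. -/
noncomputable def len : Qry → ℝ
  | Qry.qA => 1
  | Qry.qB => 1
  | Qry.qAB => 2

lemma sum_src (f : Src → ℝ) : ∑ x, f x = f Src.A + f Src.B := by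
  rw [show (Finset.univ : Finset Src) = {Src.A, Src.B} from rfl,
    Finset.sum_pair (by decide)]

lemma sum_qry (f : Qry → ℝ) : ∑ q, f q = f Qry.qA + f Qry.qB + f Qry.qAB := by
  rw [show (Finset.univ : Finset Qry) = {Qry.qA, Qry.qB, Qry.qAB} from rfl]
  rw [Finset.sum_insert (by decide), Finset.sum_pair (by decide)]
  ring

/-- For the symmetric two-state Markov chain with flip probability `0 < α ≤ 1/2` and strictly
positive initial pmf `μ`, with `U = (X₀, X₂)` and `X = X₁`, every joint pmf of `(U,X,Q)`
extending the law of `(U,X)` that is decodable and private has expected query length at least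
`2 − 2α²/(α²+(1−α)²)`. -/
theorem example_converse_bound (α : ℝ) (h0 : 0 < α) (h2 : α ≤ 1 / 2)
    (μ : Src → ℝ) (hμpos : ∀ x, 0 < μ x) (hμ : ∑ x, μ x = 1)
    (j : Src × Src → Src → Qry → ℝ)
    (hnn : ∀ u x q, 0 ≤ j u x q)
    -- the (U,X)-marginal is the law of ((X₀,X₂),X₁) under the Markov chain
    (hmarg : ∀ u x, ∑ q, j u x q
      = μ u.1 * (if u.1 = x then 1 - α else α) * (if x = u.2 then 1 - α else α))
    -- decodability
    (hdecA : ∑ u, j u Src.A Qry.qB = 0)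
    (hdecB : ∑ u, j u Src.B Qry.qA = 0)
    -- privacy: Q is independent of U
    (hpriv : ∀ u q, ∑ x, j u x q
      = (∑ x, ∑ q', j u x q') * (∑ u', ∑ x, j u' x q)) :
    2 - 2 * α ^ 2 / (α ^ 2 + (1 - α) ^ 2) ≤ ∑ u, ∑ x, ∑ q, j u x q * len q := by
  set D : ℝ := α ^ 2 + (1 - α) ^ 2 with hDdef
  have hD : 0 < D := by positivity
  -- pointwise zeros from decodability
  have hzB : ∀ u, j u Src.A Qry.qB = 0 := by
    intro u
    exact (Finset.sum_eq_zero_iff_of_nonneg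
      (fun u _ => hnn u Src.A Qry.qB)).mp hdecA u (Finset.mem_univ u)
  have hzA : ∀ u, j u Src.B Qry.qA = 0 := by
    intro u
    exact (Finset.sum_eq_zero_iff_of_nonneg
      (fun u _ => hnn u Src.B Qry.qA)).mp hdecB u (Finset.mem_univ u)
  set T1 : ℝ := ∑ u', ∑ x, j u' x Qry.qA with hT1
  set T2 : ℝ := ∑ u', ∑ x, j u' x Qry.qB with hT2
  set T3 : ℝ := ∑ u', ∑ x, j u' x Qry.qAB with hT3
  -- bound T1 using privacy at u = (B,B)
  have hSBB : ∑ x, ∑ q', j (Src.B, Src.B) x q' = μ Src.B * D := by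
    rw [sum_src, hmarg, hmarg]
    simp only [hDdef]
    simp
    ring
  have hbA : j (Src.B, Src.B) Src.A Qry.qA ≤ μ Src.B * (α * α) := by
    have h := hmarg (Src.B, Src.B) Src.A
    rw [sum_qry] at h
    simp at h
    nlinarith [hnn (Src.B, Src.B) Src.A Qry.qB, hnn (Src.B, Src.B) Src.A Qry.qAB]
  have hkA := hpriv (Src.B, Src.B) Qry.qA
  rw [sum_src, hSBB, hzA] at hkA
  -- hkA : j (B,B) A qA + 0 = μ B * D * T1
  have hT1le : T1 ≤ α ^ 2 / D := by
    rw [le_div_iff₀ hD]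
    have h1 : μ Src.B * (T1 * D) ≤ μ Src.B * (α ^ 2) := by nlinarith
    have := (mul_le_mul_iff_right₀ (hμpos Src.B)).mp h1
    linarith
  -- bound T2 using privacy at u = (A,A)
  have hSAA : ∑ x, ∑ q', j (Src.A, Src.A) x q' = μ Src.A * D := by
    rw [sum_src, hmarg, hmarg]
    simp only [hDdef]
    simp
    ring
  have hbB : j (Src.A, Src.A) Src.B Qry.qB ≤ μ Src.A * (α * α) := by
    have h := hmarg (Src.A, Src.A) Src.B
    rw [sum_qry] at h
    simp at h
    nlinarith [hnn (Src.A, Src.A) Src.B Qry.qA, hnn (Src.A, Src.A) Src.B Qry.qAB]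
  have hkB := hpriv (Src.A, Src.A) Qry.qB
  rw [sum_src, hSAA, hzB] at hkB
  have hT2le : T2 ≤ α ^ 2 / D := by
    rw [le_div_iff₀ hD]
    have h1 : μ Src.A * (T2 * D) ≤ μ Src.A * (α ^ 2) := by nlinarith
    have := (mul_le_mul_iff_right₀ (hμpos Src.A)).mp h1
    linarith
  -- total mass is 1
  have htot : ∑ u, ∑ x, ∑ q, j u x q = 1 := by
    simp only [hmarg, Fintype.sum_prod_type, sum_src]
    rw [sum_src] at hμ
    simp
    nlinarith [hμ]
  -- expected length
  have hlen : ∀ u x, ∑ q, j u x q * len q = (∑ q, j u x q) + j u x Qry.qAB := by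
    intro u x
    rw [sum_qry, sum_qry]
    simp [len]
    ring
  have hE : ∑ u, ∑ x, ∑ q, j u x q * len q
      = (∑ u, ∑ x, ∑ q, j u x q) + T3 := by
    simp only [hlen, Finset.sum_add_distrib]
    rfl
  have hsplit : ∑ u, ∑ x, ∑ q, j u x q = T1 + T2 + T3 := by
    simp only [sum_qry, Finset.sum_add_distrib]
    rfl
  rw [hE, htot, htot] at *
  have hT3 : T3 = 1 - T1 - T2 := by linarith
  have h2a : 2 * α ^ 2 / D = α ^ 2 / D + α ^ 2 / D := by ring
  linarith
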